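/- Path preserving: In the path model (group interaction on the path graph), if the profile at time t equals G, i.e. ‖x_i(t) − x_{i+1}(t)‖ ≤ ε for every i ≥ 1, then the profile at time t+1 also equals G, i.e. ‖x_i(t+1) − x_{i+1}(t+1)‖ ≤ ε for every i ≥ 1. -/

import Mathlib

/-- The update neighborhood of vertex `i ≥ 1` at time `t` in the mixed HK model under
group interaction on the path graph on `ℤ⁺` with edges `(i, i+1)`:
`N_i(t) = {j ∈ ℤ⁺ : j = i, or |i − j| = 1 and ‖x_i(t) − x_j(t)‖ ≤ ε}`. -/
noncomputable def pathNbhd {d : ℕ} (ε : ℝ) (x : ℕ → ℕ → EuclideanSpace ℝ (Fin d))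
    (t i : ℕ) : Finset ℕ :=
  (Finset.range (i + 2)).filter fun j =>
    1 ≤ j ∧ (j = i ∨ ((j = i + 1 ∨ j + 1 = i) ∧ ‖x t i - x t j‖ ≤ ε))

lemma nbhd_one {d : ℕ} (ε : ℝ) (x : ℕ → ℕ → EuclideanSpace ℝ (Fin d)) (t : ℕ)
    (h : ‖x t 1 - x t 2‖ ≤ ε) : pathNbhd ε x t 1 = {1, 2} := by
  ext j
  simp only [pathNbhd, Finset.mem_filter, Finset.mem_range, Finset.mem_insert,
    Finset.mem_singleton]
  constructor
  · rintro ⟨hr, hj1, h1 | ⟨h1 | h1, _⟩⟩ <;> omega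
  · rintro (rfl | rfl)
    · exact ⟨by omega, by omega, Or.inl rfl⟩
    · exact ⟨by omega, by omega, Or.inr ⟨Or.inl rfl, h⟩⟩

lemma nbhd_succ {d : ℕ} (ε : ℝ) (x : ℕ → ℕ → EuclideanSpace ℝ (Fin d)) (t k : ℕ)
    (h1 : ‖x t (k + 2) - x t (k + 1)‖ ≤ ε) (h2 : ‖x t (k + 2) - x t (k + 3)‖ ≤ ε) :
    pathNbhd ε x t (k + 2) = {k + 1, k + 2, k + 3} := by
  ext j
  simp only [pathNbhd, Finset.mem_filter, Finset.mem_range, Finset.mem_insert,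
    Finset.mem_singleton]
  constructor
  · rintro ⟨hr, hj1, ha | ⟨ha | ha, _⟩⟩ <;> omega
  · rintro (rfl | rfl | rfl)
    · exact ⟨by omega, by omega, Or.inr ⟨Or.inr rfl, h1⟩⟩
    · exact ⟨by omega, by omega, Or.inl rfl⟩
    · exact ⟨by omega, by omega, Or.inr ⟨Or.inl rfl, h2⟩⟩

lemma core3 {d : ℕ} (ε : ℝ) (hε : 0 ≤ ε) (x1 x2 x3 x4 : EuclideanSpace ℝ (Fin d))
    (a b : ℝ) (ha : a ∈ Set.Icc (0:ℝ) 1) (hb : b ∈ Set.Icc (0:ℝ) 1)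
    (h1 : ‖x1 - x2‖ ≤ ε) (h2 : ‖x2 - x3‖ ≤ ε) (h3 : ‖x3 - x4‖ ≤ ε) :
    ‖(a • x2 + ((1 - a) / 3) • (x1 + x2 + x3)) -
      (b • x3 + ((1 - b) / 3) • (x2 + x3 + x4))‖ ≤ ε := by
  obtain ⟨ha0, ha1⟩ := ha; obtain ⟨hb0, hb1⟩ := hb
  have key : (a • x2 + ((1 - a) / 3) • (x1 + x2 + x3)) -
      (b • x3 + ((1 - b) / 3) • (x2 + x3 + x4)) =
      ((1 - a) / 3) • (x1 - x2) + ((1 + a + b) / 3) • (x2 - x3)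
        + ((1 - b) / 3) • (x3 - x4) := by
    module
  rw [key]
  calc ‖((1 - a) / 3) • (x1 - x2) + ((1 + a + b) / 3) • (x2 - x3)
        + ((1 - b) / 3) • (x3 - x4)‖
      ≤ ‖((1 - a) / 3) • (x1 - x2)‖ + ‖((1 + a + b) / 3) • (x2 - x3)‖
        + ‖((1 - b) / 3) • (x3 - x4)‖ := norm_add₃_le
    _ = ((1 - a) / 3) * ‖x1 - x2‖ + ((1 + a + b) / 3) * ‖x2 - x3‖
        + ((1 - b) / 3) * ‖x3 - x4‖ := by
        rw [norm_smul, norm_smul, norm_smul, Real.norm_eq_abs, Real.norm_eq_abs,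
          Real.norm_eq_abs, abs_of_nonneg (by linarith), abs_of_nonneg (by linarith),
          abs_of_nonneg (by linarith)]
    _ ≤ ((1 - a) / 3) * ε + ((1 + a + b) / 3) * ε + ((1 - b) / 3) * ε := by
        gcongr <;> linarith
    _ = ε := by ring

lemma core2 {d : ℕ} (ε : ℝ) (hε : 0 ≤ ε) (x1 x2 x3 : EuclideanSpace ℝ (Fin d))
    (a b : ℝ) (ha : a ∈ Set.Icc (0:ℝ) 1) (hb : b ∈ Set.Icc (0:ℝ) 1)
    (h1 : ‖x1 - x2‖ ≤ ε) (h2 : ‖x2 - x3‖ ≤ ε) :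
    ‖(a • x1 + ((1 - a) / 2) • (x1 + x2)) -
      (b • x2 + ((1 - b) / 3) • (x1 + x2 + x3))‖ ≤ ε := by
  obtain ⟨ha0, ha1⟩ := ha; obtain ⟨hb0, hb1⟩ := hb
  have key : (a • x1 + ((1 - a) / 2) • (x1 + x2)) -
      (b • x2 + ((1 - b) / 3) • (x1 + x2 + x3)) =
      ((3*a + 2*b + 1) / 6) • (x1 - x2) + ((1 - b) / 3) • (x2 - x3) := by
    module
  rw [key]
  calc ‖((3*a + 2*b + 1) / 6) • (x1 - x2) + ((1 - b) / 3) • (x2 - x3)‖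
      ≤ ‖((3*a + 2*b + 1) / 6) • (x1 - x2)‖ + ‖((1 - b) / 3) • (x2 - x3)‖ :=
        norm_add_le _ _
    _ = ((3*a + 2*b + 1) / 6) * ‖x1 - x2‖ + ((1 - b) / 3) * ‖x2 - x3‖ := by
        rw [norm_smul, norm_smul, Real.norm_eq_abs, Real.norm_eq_abs,
          abs_of_nonneg (by linarith), abs_of_nonneg (by linarith)]
    _ ≤ ((3*a + 2*b + 1) / 6) * ε + ((1 - b) / 3) * ε := by gcongr <;> linarith
    _ ≤ ε := by nlinarith

lemma sum3 {d : ℕ} (x : ℕ → ℕ → EuclideanSpace ℝ (Fin d)) (t k : ℕ) :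
    ∑ j ∈ ({k + 1, k + 2, k + 3} : Finset ℕ), x t j
      = x t (k + 1) + x t (k + 2) + x t (k + 3) := by
  rw [Finset.sum_insert (by simp), Finset.sum_insert (by simp),
    Finset.sum_singleton, add_assoc]

lemma card3 (k : ℕ) : (({k + 1, k + 2, k + 3} : Finset ℕ).card : ℝ) = 3 := by
  rw [Finset.card_insert_of_notMem (by simp),
    Finset.card_insert_of_notMem (by simp), Finset.card_singleton]
  norm_num


/-- **Path preserving.** In the path model under group interaction, if the profile
at time `t` equals `G`, i.e. `‖x_i(t) − x_{i+1}(t)‖ ≤ ε` for every `i ≥ 1`, then the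
profile at time `t+1` also equals `G`. -/
theorem path_preserving (d : ℕ) (hd : 1 ≤ d) (ε : ℝ) (hε : 0 < ε)
    (x : ℕ → ℕ → EuclideanSpace ℝ (Fin d)) (α : ℕ → ℕ → ℝ)
    (hα : ∀ t i, α t i ∈ Set.Icc (0 : ℝ) 1)
    (hdyn : ∀ t i, 1 ≤ i → x (t + 1) i =
      α t i • x t i + ((1 - α t i) / ((pathNbhd ε x t i).card : ℝ)) •
        ∑ k ∈ pathNbhd ε x t i, x t k)
    (t : ℕ) (hprof : ∀ i, 1 ≤ i → ‖x t i - x t (i + 1)‖ ≤ ε) :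
    ∀ i, 1 ≤ i → ‖x (t + 1) i - x (t + 1) (i + 1)‖ ≤ ε := by
  have hrev : ∀ i, 1 ≤ i → ‖x t (i + 1) - x t i‖ ≤ ε := fun i hi => by
    rw [norm_sub_rev]; exact hprof i hi
  intro i hi
  rcases Nat.exists_eq_add_of_le hi with ⟨m, rfl⟩
  rcases m with _ | k
  · -- i = 1
    rw [hdyn t 1 (by omega), hdyn t 2 (by omega),
      nbhd_one ε x t (hprof 1 (by omega)),
      nbhd_succ ε x t 0 (hrev 1 (by omega)) (hprof 2 (by omega)),
      sum3, card3]
    have h12 : ((({1, 2} : Finset ℕ)).card : ℝ) = 2 := by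
      rw [Finset.card_insert_of_notMem (by simp), Finset.card_singleton]; norm_num
    rw [h12, Finset.sum_insert (by simp), Finset.sum_singleton]
    exact core2 ε hε.le _ _ _ _ _ (hα t 1) (hα t 2)
      (hprof 1 (by omega)) (hprof 2 (by omega))
  · -- i = k + 2
    rw [hdyn t (1 + (k+1)) (by omega), hdyn t (1 + (k+1) + 1) (by omega)]
    have e1 : 1 + (k + 1) = k + 2 := by omega
    have e2 : k + 2 + 1 = k + 1 + 2 := by omega
    rw [e1, e2, nbhd_succ ε x t k (hrev (k+1) (by omega)) (hprof (k+2) (by omega)),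
      nbhd_succ ε x t (k+1) (hrev (k+2) (by omega)) (hprof (k+3) (by omega)),
      sum3, sum3, card3, card3]
    have := core3 ε hε.le (x t (k+1)) (x t (k+2)) (x t (k+3)) (x t (k+4))
      (α t (k+2)) (α t (k+3)) (hα t (k+2)) (hα t (k+3))
      (hprof (k+1) (by omega)) (hprof (k+2) (by omega)) (hprof (k+3) (by omega))
    convert this using 4 <;> ring_nf
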